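/- arXiv:1106.1336 — 5 statements merged into one kernel-verified Lean document; each statement's English description precedes it below -/
import Mathlib

section
/- The graph G_3 has chromatic number exactly 4. -/
/-- `G₃`, the cube with one corner cut off: with vertices labelled
`x = 0, y = 1, z = 2, p = 3, q = 4, r = 5, w = 6`, its edges are
`xy, xz, yz, px, py, qx, qz, ry, rz, wp, wq, wr`. -/
def G3 : SimpleGraph (Fin 7) :=
  SimpleGraph.fromEdgeSet
    {s(0, 1), s(0, 2), s(1, 2), s(3, 0), s(3, 1), s(4, 0), s(4, 2),
     s(5, 1), s(5, 2), s(6, 3), s(6, 4), s(6, 5)}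

lemma G3_adj (a b : Fin 7) : G3.Adj a b ↔
    ((s(a,b) = s(0,1) ∨ s(a,b) = s(0,2) ∨ s(a,b) = s(1,2) ∨ s(a,b) = s(3,0) ∨
      s(a,b) = s(3,1) ∨ s(a,b) = s(4,0) ∨ s(a,b) = s(4,2) ∨ s(a,b) = s(5,1) ∨
      s(a,b) = s(5,2) ∨ s(a,b) = s(6,3) ∨ s(a,b) = s(6,4) ∨ s(a,b) = s(6,5)) ∧ a ≠ b) := by
  simp [G3, SimpleGraph.fromEdgeSet_adj, Set.mem_insert_iff]

/-- The graph `G₃` has chromatic number exactly `4`. -/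
theorem G3_chromaticNumber_eq_four : G3.chromaticNumber = 4 := by
  apply le_antisymm
  · have : G3.Colorable 4 := by
      refine ⟨SimpleGraph.Coloring.mk (![0, 1, 2, 2, 1, 0, 3]) ?_⟩
      intro a b hab
      rw [G3_adj] at hab
      revert hab; revert b; revert a; decide
    exact_mod_cast this.chromaticNumber_le
  · by_contra h
    push_neg at h
    have h3 : G3.chromaticNumber ≤ 3 := by
      exact Order.le_of_lt_add_one (by exact_mod_cast h)
    rw [show ((3:ℕ∞)) = ((3:ℕ):ℕ∞) by norm_num,
      SimpleGraph.chromaticNumber_le_iff_colorable] at h3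
    obtain ⟨C⟩ := h3
    have adj : ∀ a b : Fin 7, G3.Adj a b → C a ≠ C b := fun a b hab => C.valid hab
    have e01 := adj 0 1 (by rw [G3_adj]; decide)
    have e02 := adj 0 2 (by rw [G3_adj]; decide)
    have e12 := adj 1 2 (by rw [G3_adj]; decide)
    have e30 := adj 3 0 (by rw [G3_adj]; decide)
    have e31 := adj 3 1 (by rw [G3_adj]; decide)
    have e40 := adj 4 0 (by rw [G3_adj]; decide)
    have e42 := adj 4 2 (by rw [G3_adj]; decide)
    have e51 := adj 5 1 (by rw [G3_adj]; decide)
    have e52 := adj 5 2 (by rw [G3_adj]; decide)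
    have e63 := adj 6 3 (by rw [G3_adj]; decide)
    have e64 := adj 6 4 (by rw [G3_adj]; decide)
    have e65 := adj 6 5 (by rw [G3_adj]; decide)
    have hv : ∀ i : Fin 7, (C i).val < 3 := fun i => (C i).isLt
    have := hv 0; have := hv 1; have := hv 2; have := hv 3; have := hv 4
    have := hv 5; have := hv 6
    simp only [Ne, Fin.ext_iff] at e01 e02 e12 e30 e31 e40 e42 e51 e52 e63 e64 e65
    omega
end

section
/- The graph K_5 minus one edge (K_5^-) is a minor of the graph G_3; consequently G_3 is not a free-Hadwiger graph for k = 5. -/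
/-- `H` is a minor of `G`: there are disjoint connected branch sets in `G`, one for each
vertex of `H`, such that every edge of `H` is realized by an edge of `G` between the
corresponding branch sets. -/
def IsMinor {β α : Type*} (H : SimpleGraph β) (G : SimpleGraph α) : Prop :=
  ∃ f : α → Option β,
    (∀ b : β, ∃ a : α, f a = some b) ∧
    (∀ b : β, (G.induce {a : α | f a = some b}).Connected) ∧
    (∀ b₁ b₂ : β, H.Adj b₁ b₂ →
      ∃ a₁ a₂ : α, f a₁ = some b₁ ∧ f a₂ = some b₂ ∧ G.Adj a₁ a₂)

/-- `K₅` with one edge removed. -/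
def K5minus : SimpleGraph (Fin 5) :=
  (SimpleGraph.completeGraph (Fin 5)).deleteEdges {s(0, 1)}

/-- The graph obtained from `G` by adding the edge `{u, v}`. -/
def addEdge {α : Type*} (G : SimpleGraph α) (u v : α) : SimpleGraph α :=
  SimpleGraph.fromEdgeSet (insert s(u, v) G.edgeSet)

/-- `G` is a free-Hadwiger graph for `k = 5`: adding any edge to `G` still yields a graph
with no `K₅` minor (so `G` lies in the free class `Free(H₅)`). -/
def FreeHadwiger5 {α : Type*} (G : SimpleGraph α) : Prop :=
  ∀ u v : α, u ≠ v → ¬ IsMinor (SimpleGraph.completeGraph (Fin 5)) (addEdge G u v)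

instance : DecidableRel G3.Adj := fun a b =>
  decidable_of_iff (a ≠ b ∧ (s(a,b) = s(0,1) ∨ s(a,b) = s(0,2) ∨ s(a,b) = s(1,2) ∨
      s(a,b) = s(3,0) ∨ s(a,b) = s(3,1) ∨ s(a,b) = s(4,0) ∨ s(a,b) = s(4,2) ∨
      s(a,b) = s(5,1) ∨ s(a,b) = s(5,2) ∨ s(a,b) = s(6,3) ∨ s(a,b) = s(6,4) ∨
      s(a,b) = s(6,5)))
    (by simp [G3, SimpleGraph.fromEdgeSet_adj, Set.mem_insert_iff, and_comm])

instance : DecidableRel K5minus.Adj := fun a b =>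
  decidable_of_iff (a ≠ b ∧ ¬ s(a,b) = s(0,1))
    (by simp [K5minus, SimpleGraph.deleteEdges_adj, and_comm])

instance : DecidableRel (addEdge G3 1 4).Adj := fun a b =>
  decidable_of_iff ((s(a,b) = s(1,4) ∧ a ≠ b) ∨ G3.Adj a b)
    (by
      simp only [addEdge, SimpleGraph.fromEdgeSet_adj, Set.mem_insert_iff,
        SimpleGraph.mem_edgeSet]
      constructor
      · rintro (⟨h1, h2⟩ | h)
        · exact ⟨Or.inl h1, h2⟩
        · exact ⟨Or.inr h, h.ne⟩
      · rintro ⟨h1 | h1, h2⟩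
        · exact Or.inl ⟨h1, h2⟩
        · exact Or.inr h1)

instance : DecidableRel (SimpleGraph.completeGraph (Fin 5)).Adj := fun a b =>
  decidable_of_iff (a ≠ b) Iff.rfl

def f : Fin 7 → Option (Fin 5)
  | 0 => some 2
  | 1 => some 1
  | 2 => some 3
  | 3 => some 4
  | 4 => some 0
  | 5 => some 4
  | 6 => some 4

/-- `K₅⁻` is a minor of `G₃`; consequently `G₃` is not a free-Hadwiger graph for `k = 5`. -/
theorem K5minus_isMinor_G3 : IsMinor K5minus G3 ∧ ¬ FreeHadwiger5 G3 := by
  have hne : ∀ b : Fin 5, ∃ a : Fin 7, f a = some b := by decide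
  have hpre1 : ∀ b : Fin 5, (G3.induce {a : Fin 7 | f a = some b}).Preconnected := by decide
  have hpre2 : ∀ b : Fin 5,
      ((addEdge G3 1 4).induce {a : Fin 7 | f a = some b}).Preconnected := by decide
  have hedge1 : ∀ b₁ b₂ : Fin 5, K5minus.Adj b₁ b₂ →
      ∃ a₁ a₂ : Fin 7, f a₁ = some b₁ ∧ f a₂ = some b₂ ∧ G3.Adj a₁ a₂ := by decide
  have hedge2 : ∀ b₁ b₂ : Fin 5, (SimpleGraph.completeGraph (Fin 5)).Adj b₁ b₂ →
      ∃ a₁ a₂ : Fin 7, f a₁ = some b₁ ∧ f a₂ = some b₂ ∧ (addEdge G3 1 4).Adj a₁ a₂ := by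
    decide
  constructor
  · refine ⟨f, hne, fun b => ?_, hedge1⟩
    obtain ⟨a, ha⟩ := hne b
    haveI : Nonempty {a : Fin 7 | f a = some b} := ⟨⟨a, ha⟩⟩
    exact ⟨hpre1 b⟩
  · intro h
    refine h 1 4 (by decide) ⟨f, hne, fun b => ?_, hedge2⟩
    obtain ⟨a, ha⟩ := hne b
    haveI : Nonempty {a : Fin 7 | f a = some b} := ⟨⟨a, ha⟩⟩
    exact ⟨hpre2 b⟩
end

section
/- The complete bipartite graph K_{3,3} is not a minor of the graph G_3. (Together with the fact that K_{3,3}^- is a minor of G_3, this gives G_3 the minor bracket ⟨K_{3,3}^-, K_{3,3}⟩.) -/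
lemma G3_adj_iff (a b : Fin 7) : G3.Adj a b ↔
    (s(a,b) ∈ ({s(0, 1), s(0, 2), s(1, 2), s(3, 0), s(3, 1), s(4, 0), s(4, 2),
     s(5, 1), s(5, 2), s(6, 3), s(6, 4), s(6, 5)} : Finset (Sym2 (Fin 7)))) ∧ a ≠ b := by
  simp [G3, SimpleGraph.fromEdgeSet_adj, Set.mem_insert_iff, Set.mem_singleton_iff,
    Finset.mem_insert, Finset.mem_singleton]

instance G3.decAdj : DecidableRel G3.Adj := fun a b => decidable_of_iff _ (G3_adj_iff a b).symm

/-- Adjacency of `G3` as a fast boolean function on natural-number codes. -/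
def adjB (a b : ℕ) : Bool := ((248714449704606 >>> (a * 7 + b)) &&& 1) == 1

lemma adjB_of_adj : ∀ {a b : Fin 7}, G3.Adj a b → adjB a.val b.val = true := by decide

/-- The condition that the `K₃,₃`-edge between (left) block `i` and (right) block `j`,
with representatives `x` and `y`, is realized, where `e` is the extra vertex attached to
block `t` (with `t = 6` meaning no block gets the extra vertex). -/
def edgeB (x y e t i j : ℕ) : Bool :=
  adjB x y || (t == i && adjB e y) || (t == j && adjB e x)

def okB (v0 v1 v2 v3 v4 v5 e t : ℕ) : Bool :=
  edgeB v0 v3 e t 0 3 && edgeB v0 v4 e t 0 4 && edgeB v0 v5 e t 0 5 &&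
  edgeB v1 v3 e t 1 3 && edgeB v1 v4 e t 1 4 && edgeB v1 v5 e t 1 5 &&
  edgeB v2 v3 e t 2 3 && edgeB v2 v4 e t 2 4 && edgeB v2 v5 e t 2 5

set_option maxRecDepth 100000 in
set_option maxHeartbeats 4000000 in
theorem key : ∀ v0 ∈ List.range 7, ∀ v1 ∈ List.range 7, v1 = v0 ∨
    ∀ v2 ∈ List.range 7, (v2 = v0 ∨ v2 = v1) ∨
    ∀ v3 ∈ List.range 7, (v3 = v0 ∨ v3 = v1 ∨ v3 = v2) ∨
    ∀ v4 ∈ List.range 7, (v4 = v0 ∨ v4 = v1 ∨ v4 = v2 ∨ v4 = v3) ∨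
    ∀ v5 ∈ List.range 7, (v5 = v0 ∨ v5 = v1 ∨ v5 = v2 ∨ v5 = v3 ∨ v5 = v4) ∨
    ∀ e ∈ List.range 7, (e = v0 ∨ e = v1 ∨ e = v2 ∨ e = v3 ∨ e = v4 ∨ e = v5) ∨
    ∀ t ∈ List.range 7, okB v0 v1 v2 v3 v4 v5 e t = false := by decide +kernel

/-- Encoding of the block (if any) containing the extra vertex as a number in `[0,6]`. -/
def tEnc : Option (Fin 3 ⊕ Fin 3) → ℕ
  | none => 6
  | some (.inl i) => i.val
  | some (.inr j) => j.val + 3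

lemma tEnc_lt : ∀ o, tEnc o < 7 := by decide

/-- The complete bipartite graph `K₃,₃` is not a minor of `G₃`. -/
theorem K33_not_isMinor_G3 :
    ¬ IsMinor (completeBipartiteGraph (Fin 3) (Fin 3)) G3 := by
  rintro ⟨f, hsurj, -, hedge⟩
  choose g hg using hsurj
  have ginj : Function.Injective g := by
    intro b1 b2 h
    have h1 := hg b1
    rw [h, hg b2] at h1
    exact (Option.some_inj.mp h1).symm
  set s : Finset (Fin 7) := Finset.univ.image g with hs
  have hsc : s.card = 6 := by
    rw [hs, Finset.card_image_of_injective _ ginj]; simp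
  have hcc : sᶜ.card = 1 := by
    rw [Finset.card_compl, hsc]; simp
  obtain ⟨e, he⟩ := Finset.card_eq_one.mp hcc
  have heg : ∀ b, g b ≠ e := by
    have hem : e ∈ sᶜ := he ▸ Finset.mem_singleton_self e
    intro b hb
    exact (Finset.mem_compl.mp hem) (hb ▸ Finset.mem_image_of_mem g (Finset.mem_univ b))
  have hfib : ∀ a b, f a = some b → a = g b ∨ a = e := by
    intro a b hab
    by_cases hmem : a ∈ s
    · obtain ⟨b', -, rfl⟩ := Finset.mem_image.mp hmem
      have h1 := hg b'
      rw [hab] at h1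
      exact Or.inl (congrArg g (Option.some_inj.mp h1).symm)
    · have : a ∈ sᶜ := Finset.mem_compl.mpr hmem
      rw [he] at this
      exact Or.inr (Finset.mem_singleton.mp this)
  have hne : ∀ b b' : Fin 3 ⊕ Fin 3, b ≠ b' → ((g b : Fin 7) : ℕ) = ((g b' : Fin 7) : ℕ) → False :=
    fun b b' hbb h => hbb (ginj (Fin.val_injective h))
  have hnee : ∀ b : Fin 3 ⊕ Fin 3, ((e : Fin 7) : ℕ) = ((g b : Fin 7) : ℕ) → False :=
    fun b h => heg b (Fin.val_injective h.symm)
  have mem7 : ∀ a : Fin 7, (a : ℕ) ∈ List.range 7 := fun a => List.mem_range.mpr a.isLt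
  -- realize each K₃,₃ edge
  have hedge' : ∀ (i j : Fin 3),
      edgeB ((g (.inl i) : Fin 7) : ℕ) ((g (.inr j) : Fin 7) : ℕ) ((e : Fin 7) : ℕ)
        (tEnc (f e)) (tEnc (some (.inl i))) (tEnc (some (.inr j))) = true := by
    intro i j
    obtain ⟨a1, a2, h1, h2, hadj⟩ := hedge (.inl i) (.inr j) (by simp)
    rcases hfib a1 _ h1 with ha1 | ha1 <;> rcases hfib a2 _ h2 with ha2 | ha2 <;>
      rw [ha1, ha2] at hadj
    · simp [edgeB, adjB_of_adj hadj]
    · have ht : tEnc (f e) = tEnc (some (.inr j)) := by rw [← ha2, h2]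
      simp [edgeB, ht, adjB_of_adj hadj.symm]
    · have ht : tEnc (f e) = tEnc (some (.inl i)) := by rw [← ha1, h1]
      simp [edgeB, ht, adjB_of_adj hadj]
    · exact (G3.irrefl hadj).elim
  have k1 := key _ (mem7 (g (.inl 0))) _ (mem7 (g (.inl 1)))
  have k2 := k1.resolve_left (fun h => hne _ _ (by decide) h)
  have k3 := (k2 _ (mem7 (g (.inl 2)))).resolve_left
    (fun h => by rcases h with h | h <;> exact hne _ _ (by decide) h)
  have k4 := (k3 _ (mem7 (g (.inr 0)))).resolve_left
    (fun h => by rcases h with h | h | h <;> exact hne _ _ (by decide) h)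
  have k5 := (k4 _ (mem7 (g (.inr 1)))).resolve_left
    (fun h => by rcases h with h | h | h | h <;> exact hne _ _ (by decide) h)
  have k6 := (k5 _ (mem7 (g (.inr 2)))).resolve_left
    (fun h => by rcases h with h | h | h | h | h <;> exact hne _ _ (by decide) h)
  have k7 := (k6 _ (mem7 e)).resolve_left
    (fun h => by rcases h with h | h | h | h | h | h <;> exact hnee _ h)
  have k8 := k7 _ (List.mem_range.mpr (tEnc_lt (f e)))
  have hok : okB ((g (.inl 0) : Fin 7) : ℕ) ((g (.inl 1) : Fin 7) : ℕ) ((g (.inl 2) : Fin 7) : ℕ)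
      ((g (.inr 0) : Fin 7) : ℕ) ((g (.inr 1) : Fin 7) : ℕ) ((g (.inr 2) : Fin 7) : ℕ)
      ((e : Fin 7) : ℕ) (tEnc (f e)) = true := by
    simp only [okB, Bool.and_eq_true]
    exact ⟨⟨⟨⟨⟨⟨⟨⟨hedge' 0 0, hedge' 0 1⟩, hedge' 0 2⟩, hedge' 1 0⟩, hedge' 1 1⟩, hedge' 1 2⟩,
      hedge' 2 0⟩, hedge' 2 1⟩, hedge' 2 2⟩
  rw [k8] at hok
  exact Bool.false_ne_true hok
end

section
/- For every natural number n ≥ 5, the graph K_5 minus one edge (K_5^-) is not a minor of the wheel graph W_n. (Together with the fact that W_4 is a minor of W_n, this gives W_n the minor bracket ⟨W_4, K_5^-⟩.) -/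
/-- The wheel graph `W n`: hub vertex `0` joined to a rim cycle on vertices `1, …, n`. -/
def wheelGraph (n : ℕ) : SimpleGraph (Fin (n + 1)) :=
  SimpleGraph.fromRel (fun i j =>
    (i = 0 ∧ j ≠ 0) ∨ (i ≠ 0 ∧ j ≠ 0 ∧ (j : ℕ) = (i : ℕ) % n + 1))

namespace K5WheelAux

/-- "Distance from the cut vertex `c` along the rim", a piecewise formula. -/
def gfun (n c x : ℕ) : ℕ := if c ≤ x then x - c else x + n - c

lemma mod_small {x n : ℕ} (h1 : 1 ≤ x) (h2 : x ≤ n) :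
    x % n = if x = n then 0 else x := by
  rcases eq_or_lt_of_le h2 with h | h
  · subst h; simp
  · rw [Nat.mod_eq_of_lt h, if_neg (by omega)]

lemma gfun_step {n c x y : ℕ} (hc : 1 ≤ c) (hcn : c ≤ n)
    (hx : 1 ≤ x) (hxn : x ≤ n) (hy : 1 ≤ y) (hyn : y ≤ n)
    (hyc : y ≠ c) (h : y = x % n + 1) : gfun n c y = gfun n c x + 1 := by
  rw [mod_small hx hxn] at h
  unfold gfun
  split_ifs at h ⊢ <;> omega

lemma gfun_succ_self {n c y : ℕ} (hc : 1 ≤ c) (hcn : c ≤ n)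
    (hy : 1 ≤ y) (hyn : y ≤ n) (hn : 2 ≤ n)
    (h : y = c % n + 1) : gfun n c y = 1 := by
  rw [mod_small hc hcn] at h
  unfold gfun; split_ifs at h ⊢ <;> omega

lemma gfun_pred_self {n c x : ℕ} (hc : 1 ≤ c) (hcn : c ≤ n)
    (hx : 1 ≤ x) (hxn : x ≤ n) (hn : 2 ≤ n)
    (h : c = x % n + 1) : gfun n c x = n - 1 := by
  rw [mod_small hx hxn] at h
  unfold gfun; split_ifs at h ⊢ <;> omega

lemma gfun_lt {n c x : ℕ} (hc : 1 ≤ c) (hcn : c ≤ n) (hx : 1 ≤ x) (hxn : x ≤ n) :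
    gfun n c x < n := by unfold gfun; split_ifs <;> omega

lemma gfun_pos {n c x : ℕ} (hc : 1 ≤ c) (hcn : c ≤ n) (hx : 1 ≤ x) (hxn : x ≤ n)
    (hxc : x ≠ c) : 1 ≤ gfun n c x := by unfold gfun; split_ifs <;> omega

lemma gfun_inj {n c x y : ℕ} (hc : 1 ≤ c) (hcn : c ≤ n) (hx : 1 ≤ x) (hxn : x ≤ n)
    (hy : 1 ≤ y) (hyn : y ≤ n) (h : gfun n c x = gfun n c y) : x = y := by
  unfold gfun at h; split_ifs at h <;> omega

lemma wheel_adj_rim {n : ℕ} {x y : Fin (n+1)} (hx : x ≠ 0) (hy : y ≠ 0)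
    (h : (wheelGraph n).Adj x y) :
    (y : ℕ) = (x : ℕ) % n + 1 ∨ (x : ℕ) = (y : ℕ) % n + 1 := by
  simp only [wheelGraph, SimpleGraph.fromRel_adj] at h
  tauto

lemma val_bounds {n : ℕ} {z : Fin (n+1)} (hz : z ≠ 0) : 1 ≤ (z : ℕ) ∧ (z : ℕ) ≤ n := by
  have h1 : (z : ℕ) ≠ 0 := by
    intro h
    apply hz
    ext
    simp [h]
  have h2 := z.isLt
  omega

/-- Discrete intermediate value theorem along a walk inside `S` on the rim. -/
lemma walk_ivt {n : ℕ} (hn : 2 ≤ n) {S : Set (Fin (n+1))} (h0 : (0 : Fin (n+1)) ∉ S)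
    {c : Fin (n+1)} (hc : c ≠ 0) (hcS : c ∉ S)
    {x y : ↥S} (p : ((wheelGraph n).induce S).Walk x y) :
    ∀ m : ℕ, gfun n c.val x.1.val ≤ m → m ≤ gfun n c.val y.1.val →
      ∃ z ∈ S, gfun n c.val z.val = m := by
  obtain ⟨hc1, hcn⟩ := val_bounds hc
  induction p with
  | @nil u =>
    intro m h1 h2
    exact ⟨u.1, u.2, by omega⟩
  | @cons u v w h p ih =>
    intro m h1 h2
    have hadj : (wheelGraph n).Adj u.1 v.1 := h
    have hu0 : u.1 ≠ 0 := fun hh => h0 (hh ▸ u.2)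
    have hv0 : v.1 ≠ 0 := fun hh => h0 (hh ▸ v.2)
    obtain ⟨hu1, hun⟩ := val_bounds hu0
    obtain ⟨hv1, hvn⟩ := val_bounds hv0
    have huc : u.1.val ≠ c.val := by
      intro hh
      exact hcS ((Fin.ext hh : u.1 = c) ▸ u.2)
    have hvc : v.1.val ≠ c.val := by
      intro hh
      exact hcS ((Fin.ext hh : v.1 = c) ▸ v.2)
    have hstep : gfun n c.val v.1.val = gfun n c.val u.1.val + 1 ∨
        gfun n c.val u.1.val = gfun n c.val v.1.val + 1 := by
      rcases wheel_adj_rim hu0 hv0 hadj with hr | hr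
      · exact Or.inl (gfun_step hc1 hcn hu1 hun hv1 hvn hvc hr)
      · exact Or.inr (gfun_step hc1 hcn hv1 hvn hu1 hun huc hr)
    by_cases hm : m = gfun n c.val u.1.val
    · exact ⟨u.1, u.2, hm.symm⟩
    · exact ih m (by omega) h2

/-- Core lemma: a connected set of rim vertices cannot have three distinct
outside rim neighbours. -/
lemma rim_lemma {n : ℕ} (hn : 2 ≤ n) {S : Set (Fin (n+1))}
    (h0 : (0 : Fin (n+1)) ∉ S)
    (hconn : ((wheelGraph n).induce S).Connected)
    {c₁ c₂ c₃ : Fin (n+1)}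
    (hc1 : c₁ ≠ 0) (hc2 : c₂ ≠ 0) (hc3 : c₃ ≠ 0)
    (hc1S : c₁ ∉ S) (hc2S : c₂ ∉ S) (hc3S : c₃ ∉ S)
    (h12 : c₁ ≠ c₂) (h13 : c₁ ≠ c₃) (h23 : c₂ ≠ c₃)
    (ha1 : ∃ s ∈ S, (wheelGraph n).Adj s c₁)
    (ha2 : ∃ s ∈ S, (wheelGraph n).Adj s c₂)
    (ha3 : ∃ s ∈ S, (wheelGraph n).Adj s c₃) : False := by
  obtain ⟨s₁, hs₁S, hadj1⟩ := ha1
  obtain ⟨s₂, hs₂S, hadj2⟩ := ha2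
  obtain ⟨s₃, hs₃S, hadj3⟩ := ha3
  set c : ℕ := (c₁ : ℕ) with hcdef
  obtain ⟨hc1l, hc1u⟩ := val_bounds hc1
  obtain ⟨hc2l, hc2u⟩ := val_bounds hc2
  obtain ⟨hc3l, hc3u⟩ := val_bounds hc3
  have hs0 : ∀ z ∈ S, z ≠ (0 : Fin (n+1)) := fun z hz hh => h0 (hh ▸ hz)
  obtain ⟨hs₁l, hs₁u⟩ := val_bounds (hs0 _ hs₁S)
  obtain ⟨hs₂l, hs₂u⟩ := val_bounds (hs0 _ hs₂S)
  obtain ⟨hs₃l, hs₃u⟩ := val_bounds (hs0 _ hs₃S)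
  have hsc : ∀ z ∈ S, (z : ℕ) ≠ c := by
    intro z hz hh
    exact hc1S ((Fin.ext hh : z = c₁) ▸ hz)
  -- attainment via connectivity
  have hattain : ∀ s ∈ S, ∀ t ∈ S, ∀ m : ℕ,
      gfun n c (s : ℕ) ≤ m → m ≤ gfun n c (t : ℕ) → ∃ z ∈ S, gfun n c (z : ℕ) = m := by
    intro s hs t ht m hm1 hm2
    obtain ⟨p⟩ := hconn.preconnected ⟨s, hs⟩ ⟨t, ht⟩
    exact walk_ivt hn h0 hc1 hc1S p m hm1 hm2

  -- g-values of S-elements are in [1, n-1]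
  have hgpos : ∀ z ∈ S, 1 ≤ gfun n c (z : ℕ) := by
    intro z hz
    obtain ⟨hl, hu⟩ := val_bounds (hs0 _ hz)
    exact gfun_pos hc1l hc1u hl hu (hsc _ hz)
  -- g-values of c₂, c₃
  have hvne12 : (c₂ : ℕ) ≠ c := fun hh => h12 (Fin.ext hh).symm
  have hvne13 : (c₃ : ℕ) ≠ c := fun hh => h13 (Fin.ext hh).symm
  have hg2pos : 1 ≤ gfun n c (c₂ : ℕ) := gfun_pos hc1l hc1u hc2l hc2u hvne12
  have hg3pos : 1 ≤ gfun n c (c₃ : ℕ) := gfun_pos hc1l hc1u hc3l hc3u hvne13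
  have hg2lt : gfun n c (c₂ : ℕ) < n := gfun_lt hc1l hc1u hc2l hc2u
  have hg3lt : gfun n c (c₃ : ℕ) < n := gfun_lt hc1l hc1u hc3l hc3u
  -- no z in S has g z = g c₂ (resp. c₃)
  have hnc2 : ∀ z ∈ S, gfun n c (z : ℕ) ≠ gfun n c (c₂ : ℕ) := by
    intro z hz hh
    obtain ⟨hl, hu⟩ := val_bounds (hs0 _ hz)
    exact hc2S ((Fin.ext (gfun_inj hc1l hc1u hl hu hc2l hc2u hh) : z = c₂) ▸ hz)
  have hnc3 : ∀ z ∈ S, gfun n c (z : ℕ) ≠ gfun n c (c₃ : ℕ) := by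
    intro z hz hh
    obtain ⟨hl, hu⟩ := val_bounds (hs0 _ hz)
    exact hc3S ((Fin.ext (gfun_inj hc1l hc1u hl hu hc3l hc3u hh) : z = c₃) ▸ hz)
  have hg23 : gfun n c (c₂ : ℕ) ≠ gfun n c (c₃ : ℕ) := by
    intro hh
    exact h23 (Fin.ext (gfun_inj hc1l hc1u hc2l hc2u hc3l hc3u hh))
  -- step relations for c₂, c₃
  have hstep2 : gfun n c (c₂ : ℕ) = gfun n c (s₂ : ℕ) + 1 ∨
      gfun n c (s₂ : ℕ) = gfun n c (c₂ : ℕ) + 1 := by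
    rcases wheel_adj_rim (hs0 _ hs₂S) hc2 hadj2 with hr | hr
    · exact Or.inl (gfun_step hc1l hc1u hs₂l hs₂u hc2l hc2u hvne12 hr)
    · exact Or.inr (gfun_step hc1l hc1u hc2l hc2u hs₂l hs₂u (hsc _ hs₂S) hr)
  have hstep3 : gfun n c (c₃ : ℕ) = gfun n c (s₃ : ℕ) + 1 ∨
      gfun n c (s₃ : ℕ) = gfun n c (c₃ : ℕ) + 1 := by
    rcases wheel_adj_rim (hs0 _ hs₃S) hc3 hadj3 with hr | hr
    · exact Or.inl (gfun_step hc1l hc1u hs₃l hs₃u hc3l hc3u hvne13 hr)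
    · exact Or.inr (gfun_step hc1l hc1u hc3l hc3u hs₃l hs₃u (hsc _ hs₃S) hr)
  -- g s₁ is 1 or n-1
  have hgs1 : gfun n c (s₁ : ℕ) = 1 ∨ gfun n c (s₁ : ℕ) = n - 1 := by
    rcases wheel_adj_rim (hs0 _ hs₁S) hc1 hadj1 with hr | hr
    · exact Or.inr (gfun_pred_self hc1l hc1u hs₁l hs₁u hn hr)
    · exact Or.inl (gfun_succ_self hc1l hc1u hs₁l hs₁u hn hr)
  have hg2ltn := gfun_lt hc1l hc1u hs₂l hs₂u
  have hg3ltn := gfun_lt hc1l hc1u hs₃l hs₃u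
  rcases hgs1 with hgs1 | hgs1
  · -- case g s₁ = 1 : all m in [1, g sₖ] attained
    have hA : ∀ t ∈ S, ∀ m : ℕ, 1 ≤ m → m ≤ gfun n c (t : ℕ) →
        ∃ z ∈ S, gfun n c (z : ℕ) = m := by
      intro t ht m h1 h2
      exact hattain s₁ hs₁S t ht m (by omega) h2
    have hup2 : gfun n c (c₂ : ℕ) = gfun n c (s₂ : ℕ) + 1 := by
      rcases hstep2 with hh | hh
      · exact hh
      · obtain ⟨z, hz, hgz⟩ := hA s₂ hs₂S (gfun n c (c₂ : ℕ)) hg2pos (by omega)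
        exact absurd hgz (hnc2 z hz)
    have hup3 : gfun n c (c₃ : ℕ) = gfun n c (s₃ : ℕ) + 1 := by
      rcases hstep3 with hh | hh
      · exact hh
      · obtain ⟨z, hz, hgz⟩ := hA s₃ hs₃S (gfun n c (c₃ : ℕ)) hg3pos (by omega)
        exact absurd hgz (hnc3 z hz)
    rcases Nat.lt_or_ge (gfun n c (c₂ : ℕ)) (gfun n c (c₃ : ℕ)) with hlt | hge
    · obtain ⟨z, hz, hgz⟩ := hA s₃ hs₃S (gfun n c (c₂ : ℕ)) hg2pos (by omega)
      exact absurd hgz (hnc2 z hz)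
    · have hlt : gfun n c (c₃ : ℕ) < gfun n c (c₂ : ℕ) := by omega
      obtain ⟨z, hz, hgz⟩ := hA s₂ hs₂S (gfun n c (c₃ : ℕ)) hg3pos (by omega)
      exact absurd hgz (hnc3 z hz)
  · -- case g s₁ = n - 1 : all m in [g sₖ, n-1] attained
    have hA : ∀ t ∈ S, ∀ m : ℕ, gfun n c (t : ℕ) ≤ m → m ≤ n - 1 →
        ∃ z ∈ S, gfun n c (z : ℕ) = m := by
      intro t ht m h1 h2
      exact hattain t ht s₁ hs₁S m h1 (by omega)
    have hdn2 : gfun n c (s₂ : ℕ) = gfun n c (c₂ : ℕ) + 1 := by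
      rcases hstep2 with hh | hh
      · obtain ⟨z, hz, hgz⟩ := hA s₂ hs₂S (gfun n c (c₂ : ℕ)) (by omega) (by omega)
        exact absurd hgz (hnc2 z hz)
      · exact hh
    have hdn3 : gfun n c (s₃ : ℕ) = gfun n c (c₃ : ℕ) + 1 := by
      rcases hstep3 with hh | hh
      · obtain ⟨z, hz, hgz⟩ := hA s₃ hs₃S (gfun n c (c₃ : ℕ)) (by omega) (by omega)
        exact absurd hgz (hnc3 z hz)
      · exact hh
    rcases Nat.lt_or_ge (gfun n c (c₂ : ℕ)) (gfun n c (c₃ : ℕ)) with hlt | hge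
    · obtain ⟨z, hz, hgz⟩ := hA s₂ hs₂S (gfun n c (c₃ : ℕ)) (by omega) (by omega)
      exact absurd hgz (hnc3 z hz)
    · have hlt : gfun n c (c₃ : ℕ) < gfun n c (c₂ : ℕ) := by omega
      obtain ⟨z, hz, hgz⟩ := hA s₃ hs₃S (gfun n c (c₂ : ℕ)) (by omega) (by omega)
      exact absurd hgz (hnc2 z hz)

lemma K5adj (i j : Fin 5) :
    K5minus.Adj i j ↔ i ≠ j ∧ ¬((i = 0 ∧ j = 1) ∨ (i = 1 ∧ j = 0)) := by
  simp [K5minus, SimpleGraph.completeGraph, SimpleGraph.deleteEdges_adj, Sym2.eq_iff]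

lemma choose4 : ∀ e : Fin 5, ∃ b b₁ b₂ b₃ : Fin 5,
    b ≠ e ∧ b₁ ≠ e ∧ b₂ ≠ e ∧ b₃ ≠ e ∧
    b₁ ≠ b ∧ b₂ ≠ b ∧ b₃ ≠ b ∧ b₁ ≠ b₂ ∧ b₁ ≠ b₃ ∧ b₂ ≠ b₃ ∧
    K5minus.Adj b b₁ ∧ K5minus.Adj b b₂ ∧ K5minus.Adj b b₃ := by
  simp only [K5adj]
  intro e
  fin_cases e
  · exact ⟨2, 1, 3, 4, by decide⟩
  · exact ⟨2, 0, 3, 4, by decide⟩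
  · exact ⟨3, 0, 1, 4, by decide⟩
  · exact ⟨2, 0, 1, 4, by decide⟩
  · exact ⟨2, 0, 1, 3, by decide⟩

end K5WheelAux

open K5WheelAux in
/-- For every `n ≥ 5`, the graph `K₅⁻` is not a minor of the wheel `W n`. -/
theorem K5minus_not_isMinor_wheelGraph (n : ℕ) (hn : 5 ≤ n) :
    ¬ IsMinor K5minus (wheelGraph n) := by
  rintro ⟨f, hsurj, hconn, hedge⟩
  set e : Fin 5 := (f 0).getD 0 with he
  have hub : ∀ b' : Fin 5, b' ≠ e → f 0 ≠ some b' := by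
    intro b' hb' h
    apply hb'
    rw [he, h]
    rfl
  obtain ⟨b, b₁, b₂, b₃, hbe, hb1e, hb2e, hb3e, hb1b, hb2b, hb3b, h12, h13, h23,
    hadj1, hadj2, hadj3⟩ := choose4 e
  set S : Set (Fin (n+1)) := {a | f a = some b} with hS
  have h0S : (0 : Fin (n+1)) ∉ S := fun h => hub b hbe h
  obtain ⟨a₁, c₁, hfa₁, hfc₁, hw1⟩ := hedge b b₁ hadj1
  obtain ⟨a₂, c₂, hfa₂, hfc₂, hw2⟩ := hedge b b₂ hadj2
  obtain ⟨a₃, c₃, hfa₃, hfc₃, hw3⟩ := hedge b b₃ hadj3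
  have hc₁0 : c₁ ≠ 0 := fun h => hub b₁ hb1e (h ▸ hfc₁)
  have hc₂0 : c₂ ≠ 0 := fun h => hub b₂ hb2e (h ▸ hfc₂)
  have hc₃0 : c₃ ≠ 0 := fun h => hub b₃ hb3e (h ▸ hfc₃)
  have hc₁S : c₁ ∉ S := fun h => hb1b (Option.some_injective _ (hfc₁.symm.trans h))
  have hc₂S : c₂ ∉ S := fun h => hb2b (Option.some_injective _ (hfc₂.symm.trans h))
  have hc₃S : c₃ ∉ S := fun h => hb3b (Option.some_injective _ (hfc₃.symm.trans h))
  have hcc12 : c₁ ≠ c₂ := by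
    intro h
    rw [h, hfc₂] at hfc₁
    exact h12 (Option.some_injective _ hfc₁).symm
  have hcc13 : c₁ ≠ c₃ := by
    intro h
    rw [h, hfc₃] at hfc₁
    exact h13 (Option.some_injective _ hfc₁).symm
  have hcc23 : c₂ ≠ c₃ := by
    intro h
    rw [h, hfc₃] at hfc₂
    exact h23 (Option.some_injective _ hfc₂).symm
  exact rim_lemma (by omega) h0S (hconn b) hc₁0 hc₂0 hc₃0 hc₁S hc₂S hc₃S
    hcc12 hcc13 hcc23 ⟨a₁, hfa₁, hw1⟩ ⟨a₂, hfa₂, hw2⟩ ⟨a₃, hfa₃, hw3⟩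
end

section
/- For every natural number n ≥ 5, the graph K_{3,3} minus one edge (K_{3,3}^-) is not a minor of the wheel graph W_n. -/
/-- `K₃,₃` with one edge removed. -/
def K33minus : SimpleGraph (Fin 3 ⊕ Fin 3) :=
  (completeBipartiteGraph (Fin 3) (Fin 3)).deleteEdges {s(Sum.inl 0, Sum.inr 0)}

open SimpleGraph Finset

/-- A finite connected graph has at least `|V| - 1` edges. -/
lemma conn_card_le {V : Type*} [Fintype V] (G : SimpleGraph V) [Fintype G.edgeSet]
    (h : G.Connected) : Fintype.card V ≤ G.edgeFinset.card + 1 := by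
  classical
  obtain ⟨v₀⟩ := h.nonempty
  have key : ∀ v : V, v ≠ v₀ → ∃ u, G.Adj u v ∧ G.dist v₀ u + 1 = G.dist v₀ v := by
    intro v hv
    obtain ⟨p, hp⟩ := (h.preconnected v₀ v).exists_walk_length_eq_dist
    have hq : p.reverse.length = G.dist v₀ v := by rw [SimpleGraph.Walk.length_reverse]; exact hp
    cases hq' : p.reverse with
    | nil => exact absurd rfl hv
    | @cons _ u _ hadj r =>
      refine ⟨u, hadj.symm, ?_⟩
      have h1 : G.dist v₀ u ≤ r.reverse.length := dist_le _
      have h2 : r.length + 1 = G.dist v₀ v := by rw [← hq, hq']; simp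
      have h1' : G.dist v₀ u ≤ r.length := by simpa using h1
      have h4 : G.dist u v ≤ 1 := by
        have := dist_le (SimpleGraph.Walk.cons hadj.symm SimpleGraph.Walk.nil : G.Walk u v)
        simpa using this
      have h3 : G.dist v₀ v ≤ G.dist v₀ u + G.dist u v := h.dist_triangle
      omega
  choose u hadj hdist using key
  have hinj : Function.Injective
      (fun v : {v : V // v ≠ v₀} =>
        (⟨s(u v.1 v.2, v.1), (G.mem_edgeSet).2 (hadj v.1 v.2)⟩ : G.edgeSet)) := by
    rintro ⟨a, ha⟩ ⟨b, hb⟩ hab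
    simp only [Subtype.mk_eq_mk, Sym2.eq_iff] at hab ⊢
    rcases hab with ⟨h1, h2⟩ | ⟨h1, h2⟩
    · exact h2
    · exfalso
      have d1 := hdist a ha
      have d2 := hdist b hb
      rw [h1] at d1; rw [← h2] at d2
      omega
  have hcard := Fintype.card_le_of_injective _ hinj
  have hc1 : Fintype.card {v : V // v ≠ v₀} = Fintype.card V - 1 := by
    rw [Fintype.card_subtype_compl, Fintype.card_subtype_eq]
  rw [hc1] at hcard
  have hc2 : Fintype.card G.edgeSet = G.edgeFinset.card := by
    rw [edgeFinset, Set.toFinset_card]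
  rw [hc2] at hcard
  have hpos : 0 < Fintype.card V := Fintype.card_pos_iff.2 ⟨v₀⟩
  omega

/-- A connected subset of a graph with maximum degree at most two cannot have three
distinct outside neighbours. -/
lemma three_boundary {V : Type*} [Fintype V] (G : SimpleGraph V)
    (hdeg : ∀ v x y z : V, G.Adj v x → G.Adj v y → G.Adj v z → x = y ∨ x = z ∨ y = z)
    (S : Set V) (hconn : (G.induce S).Connected)
    {s1 s2 s3 b1 b2 b3 : V} (hs1 : s1 ∈ S) (hs2 : s2 ∈ S) (hs3 : s3 ∈ S)
    (hb1 : b1 ∉ S) (hb2 : b2 ∉ S) (hb3 : b3 ∉ S)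
    (h12 : b1 ≠ b2) (h13 : b1 ≠ b3) (h23 : b2 ≠ b3)
    (ha1 : G.Adj s1 b1) (ha2 : G.Adj s2 b2) (ha3 : G.Adj s3 b3) : False := by
  classical
  set H := G.induce S with hH
  have hcard : Fintype.card S ≤ H.edgeFinset.card + 1 := conn_card_le _ hconn
  have hHadj : ∀ (a b : S), H.Adj a b ↔ G.Adj ↑a ↑b := by
    intro a b; simp [hH, SimpleGraph.comap_adj]
  set B : Finset V := {b1, b2, b3} with hB
  have hBcard : B.card = 3 := by
    rw [hB, card_insert_of_notMem (by simp [h12, h13]), card_insert_of_notMem (by simp [h23]),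
      card_singleton]
  have hvert : ∀ v : S, H.degree v + (B.filter (fun b => G.Adj ↑v b)).card ≤ 2 := by
    intro v
    by_contra hlt
    push_neg at hlt
    have hdisj : Disjoint ((H.neighborFinset v).image Subtype.val)
        (B.filter (fun b => G.Adj ↑v b)) := by
      rw [Finset.disjoint_left]
      rintro x hx hx'
      simp only [mem_image, mem_neighborFinset] at hx
      obtain ⟨y, _, rfl⟩ := hx
      simp only [hB, mem_filter, mem_insert, mem_singleton] at hx'
      rcases hx'.1 with rfl | rfl | rfl
      · exact hb1 y.2
      · exact hb2 y.2
      · exact hb3 y.2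
    have hcardu : 2 < (((H.neighborFinset v).image Subtype.val) ∪
        (B.filter (fun b => G.Adj ↑v b))).card := by
      rw [card_union_of_disjoint hdisj,
        Finset.card_image_of_injective _ Subtype.val_injective]
      exact hlt
    obtain ⟨x, hx, y, hy, z, hz, hxy, hxz, hyz⟩ := Finset.two_lt_card.1 hcardu
    have hadjall : ∀ w, w ∈ (((H.neighborFinset v).image Subtype.val) ∪
        (B.filter (fun b => G.Adj ↑v b))) → G.Adj ↑v w := by
      intro w hw
      rcases mem_union.1 hw with hw | hw
      · simp only [mem_image, mem_neighborFinset] at hw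
        obtain ⟨y', hy', rfl⟩ := hw
        exact (hHadj v y').1 hy'
      · exact (mem_filter.1 hw).2
    rcases hdeg ↑v x y z (hadjall x hx) (hadjall y hy) (hadjall z hz) with h | h | h
    · exact hxy h
    · exact hxz h
    · exact hyz h
  have hsum2 : 3 ≤ ∑ v : S, (B.filter (fun b => G.Adj ↑v b)).card := by
    have hswap : ∑ v : S, (B.filter (fun b => G.Adj ↑v b)).card
        = ∑ b ∈ B, (Finset.univ.filter (fun v : S => G.Adj ↑v b)).card := by
      simp only [Finset.card_filter]
      rw [Finset.sum_comm]
    rw [hswap]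
    have hone : ∀ b ∈ B, 1 ≤ (Finset.univ.filter (fun v : S => G.Adj ↑v b)).card := by
      intro b hb
      refine Finset.card_pos.2 ?_
      simp only [hB, mem_insert, mem_singleton] at hb
      rcases hb with rfl | rfl | rfl
      · exact ⟨⟨s1, hs1⟩, by simp [ha1]⟩
      · exact ⟨⟨s2, hs2⟩, by simp [ha2]⟩
      · exact ⟨⟨s3, hs3⟩, by simp [ha3]⟩
    calc 3 = ∑ _b ∈ B, 1 := by rw [Finset.sum_const, hBcard]; ring
    _ ≤ _ := Finset.sum_le_sum hone
  have hhand : ∑ v : S, H.degree v = 2 * H.edgeFinset.card :=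
    SimpleGraph.sum_degrees_eq_twice_card_edges H
  have htot : ∑ v : S, (H.degree v + (B.filter (fun b => G.Adj ↑v b)).card)
      ≤ 2 * Fintype.card S := by
    calc ∑ v : S, (H.degree v + (B.filter (fun b => G.Adj ↑v b)).card)
        ≤ ∑ _v : S, 2 := Finset.sum_le_sum (fun v _ => hvert v)
    _ = 2 * Fintype.card S := by simp [Finset.sum_const, Finset.card_univ, mul_comm]
  rw [Finset.sum_add_distrib, hhand] at htot
  omega

/-- The rim of the wheel: the wheel graph with the hub edges removed. -/
def rimGraph (n : ℕ) : SimpleGraph (Fin (n + 1)) :=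
  SimpleGraph.fromRel (fun i j => i ≠ 0 ∧ j ≠ 0 ∧ (j : ℕ) = (i : ℕ) % n + 1)

lemma rim_nbr {n : ℕ} (v b : Fin (n+1)) (h : (rimGraph n).Adj v b) :
    (b : ℕ) = (v : ℕ) % n + 1 ∨ (b : ℕ) = (if (v:ℕ) = 1 then n else (v:ℕ) - 1) := by
  rw [rimGraph, fromRel_adj] at h
  obtain ⟨hne, h | h⟩ := h
  · left; exact h.2.2
  · right
    obtain ⟨hb0, hv0, hv⟩ := h
    have hblt : (b:ℕ) < n + 1 := b.isLt
    have hb0' : (b:ℕ) ≠ 0 := fun hh => hb0 (Fin.ext (by simp [hh]))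
    rcases lt_or_ge (b:ℕ) n with hlt | hge
    · rw [Nat.mod_eq_of_lt hlt] at hv
      have hv1 : (v:ℕ) ≠ 1 := by omega
      simp only [hv1, if_false]
      omega
    · have hbn : (b:ℕ) = n := by omega
      rw [hbn, Nat.mod_self] at hv
      simp only [hv, if_true]
      exact hbn

lemma rim_deg {n : ℕ} (v x y z : Fin (n+1)) (hx : (rimGraph n).Adj v x)
    (hy : (rimGraph n).Adj v y) (hz : (rimGraph n).Adj v z) : x = y ∨ x = z ∨ y = z := by
  have hx' := rim_nbr v x hx
  have hy' := rim_nbr v y hy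
  have hz' := rim_nbr v z hz
  rcases hx' with hx' | hx' <;> rcases hy' with hy' | hy' <;> rcases hz' with hz' | hz' <;>
    simp only [Fin.ext_iff] <;> omega

lemma wheel_rim {n : ℕ} {a b : Fin (n+1)} (ha : a ≠ 0) (hb : b ≠ 0) :
    (wheelGraph n).Adj a b ↔ (rimGraph n).Adj a b := by
  rw [wheelGraph, rimGraph, fromRel_adj, fromRel_adj]
  simp [ha, hb]

lemma induce_eq {n : ℕ} {S : Set (Fin (n+1))} (h0 : (0 : Fin (n+1)) ∉ S) :
    (wheelGraph n).induce S = (rimGraph n).induce S := by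
  ext a b
  have ha : (↑a : Fin (n+1)) ≠ 0 := fun h => h0 (h ▸ a.2)
  have hb : (↑b : Fin (n+1)) ≠ 0 := fun h => h0 (h ▸ b.2)
  simp only [SimpleGraph.comap_adj]
  exact wheel_rim ha hb

lemma main_aux (n : ℕ) (f : Fin (n+1) → Option (Fin 3 ⊕ Fin 3))
    (hconn : ∀ b, ((wheelGraph n).induce {a | f a = some b}).Connected)
    (hedge : ∀ b₁ b₂, K33minus.Adj b₁ b₂ →
      ∃ a₁ a₂, f a₁ = some b₁ ∧ f a₂ = some b₂ ∧ (wheelGraph n).Adj a₁ a₂)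
    (w u₁ u₂ u₃ : Fin 3 ⊕ Fin 3)
    (hu12 : u₁ ≠ u₂) (hu13 : u₁ ≠ u₃) (hu23 : u₂ ≠ u₃)
    (hw1 : K33minus.Adj w u₁) (hw2 : K33minus.Adj w u₂) (hw3 : K33minus.Adj w u₃)
    (h0w : f 0 ≠ some w) (h01 : f 0 ≠ some u₁) (h02 : f 0 ≠ some u₂) (h03 : f 0 ≠ some u₃) :
    False := by
  obtain ⟨a₁, b₁, hfa₁, hfb₁, hab₁⟩ := hedge w u₁ hw1
  obtain ⟨a₂, b₂, hfa₂, hfb₂, hab₂⟩ := hedge w u₂ hw2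
  obtain ⟨a₃, b₃, hfa₃, hfb₃, hab₃⟩ := hedge w u₃ hw3
  set S : Set (Fin (n+1)) := {a | f a = some w} with hS
  have h0S : (0 : Fin (n+1)) ∉ S := fun h => h0w h
  have hconn' : ((rimGraph n).induce S).Connected := by
    rw [← induce_eq h0S]; exact hconn w
  have ha₁0 : a₁ ≠ 0 := fun h => h0w (h ▸ hfa₁)
  have ha₂0 : a₂ ≠ 0 := fun h => h0w (h ▸ hfa₂)
  have ha₃0 : a₃ ≠ 0 := fun h => h0w (h ▸ hfa₃)
  have hb₁0 : b₁ ≠ 0 := fun h => h01 (h ▸ hfb₁)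
  have hb₂0 : b₂ ≠ 0 := fun h => h02 (h ▸ hfb₂)
  have hb₃0 : b₃ ≠ 0 := fun h => h03 (h ▸ hfb₃)
  have hb₁S : b₁ ∉ S := fun h => hw1.ne (Option.some.inj (hfb₁.symm.trans h)).symm
  have hb₂S : b₂ ∉ S := fun h => hw2.ne (Option.some.inj (hfb₂.symm.trans h)).symm
  have hb₃S : b₃ ∉ S := fun h => hw3.ne (Option.some.inj (hfb₃.symm.trans h)).symm
  have h12 : b₁ ≠ b₂ := fun h => hu12 (Option.some.inj (hfb₁.symm.trans (h ▸ hfb₂)))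
  have h13 : b₁ ≠ b₃ := fun h => hu13 (Option.some.inj (hfb₁.symm.trans (h ▸ hfb₃)))
  have h23 : b₂ ≠ b₃ := fun h => hu23 (Option.some.inj (hfb₂.symm.trans (h ▸ hfb₃)))
  exact three_boundary (rimGraph n) (fun v x y z => rim_deg v x y z) S hconn'
    hfa₁ hfa₂ hfa₃ hb₁S hb₂S hb₃S h12 h13 h23
    ((wheel_rim ha₁0 hb₁0).1 hab₁) ((wheel_rim ha₂0 hb₂0).1 hab₂)
    ((wheel_rim ha₃0 hb₃0).1 hab₃)

/-- For every `n ≥ 5`, the graph `K₃,₃⁻` is not a minor of the wheel `W n`. -/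
theorem K33minus_not_isMinor_wheelGraph (n : ℕ) (hn : 5 ≤ n) :
    ¬ IsMinor K33minus (wheelGraph n) := by
  rintro ⟨f, hsurj, hconn, hedge⟩
  have hadjL : ∀ (i j : Fin 3), i ≠ 0 → K33minus.Adj (Sum.inl i) (Sum.inr j) := by
    intro i j hi
    simp [K33minus, SimpleGraph.deleteEdges_adj, hi]
  have hadjR : ∀ (i j : Fin 3), i ≠ 0 → K33minus.Adj (Sum.inr i) (Sum.inl j) := by
    intro i j hi
    simp [K33minus, SimpleGraph.deleteEdges_adj, hi]
  cases h0 : f 0 with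
  | none =>
    exact main_aux n f hconn hedge (Sum.inl 1) (Sum.inr 0) (Sum.inr 1) (Sum.inr 2)
      (by decide) (by decide) (by decide)
      (hadjL 1 0 (by decide)) (hadjL 1 1 (by decide)) (hadjL 1 2 (by decide))
      (by rw [h0]; simp) (by rw [h0]; simp) (by rw [h0]; simp) (by rw [h0]; simp)
  | some v =>
    cases v with
    | inl i =>
      by_cases hi : i = 1
      · subst hi
        exact main_aux n f hconn hedge (Sum.inl 2) (Sum.inr 0) (Sum.inr 1) (Sum.inr 2)
          (by decide) (by decide) (by decide)
          (hadjL 2 0 (by decide)) (hadjL 2 1 (by decide)) (hadjL 2 2 (by decide))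
          (by rw [h0]; simp) (by rw [h0]; simp) (by rw [h0]; simp) (by rw [h0]; simp)
      · exact main_aux n f hconn hedge (Sum.inl 1) (Sum.inr 0) (Sum.inr 1) (Sum.inr 2)
          (by decide) (by decide) (by decide)
          (hadjL 1 0 (by decide)) (hadjL 1 1 (by decide)) (hadjL 1 2 (by decide))
          (by rw [h0]; simp [hi]) (by rw [h0]; simp) (by rw [h0]; simp) (by rw [h0]; simp)
    | inr i =>
      by_cases hi : i = 1
      · subst hi
        exact main_aux n f hconn hedge (Sum.inr 2) (Sum.inl 0) (Sum.inl 1) (Sum.inl 2)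
          (by decide) (by decide) (by decide)
          (hadjR 2 0 (by decide)) (hadjR 2 1 (by decide)) (hadjR 2 2 (by decide))
          (by rw [h0]; simp) (by rw [h0]; simp) (by rw [h0]; simp) (by rw [h0]; simp)
      · exact main_aux n f hconn hedge (Sum.inr 1) (Sum.inl 0) (Sum.inl 1) (Sum.inl 2)
          (by decide) (by decide) (by decide)
          (hadjR 1 0 (by decide)) (hadjR 1 1 (by decide)) (hadjR 1 2 (by decide))
          (by rw [h0]; simp [hi]) (by rw [h0]; simp) (by rw [h0]; simp) (by rw [h0]; simp)
end
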